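/- Let g = L_{5,3} (nonzero brackets [e1,e2]=e3, [e1,e3]=e4) and let g_R = g ⊕ ℝ with bracket [(ξ,r),(η,k)] = ([ξ,η],0) and 1 := (0,1). In the complexification (g_R)_ℂ, the complex subspace K := span_ℂ{1, e1, e3, e4, e2 − i·e5} is a complex Lie subalgebra and satisfies K + conj(K) = (g_R)_ℂ and K ∩ conj(K) = span_ℂ{1, e1, e3, e4}. -/

import Mathlib

set_option linter.unnecessarySeqFocus false

open scoped TensorProduct

noncomputable section

section Complexification

variable (V : Type*) [AddCommGroup V] [Module ℝ V]

/-- Complex conjugation on the complexification `ℂ ⊗[ℝ] V`, as a `conj`-semilinear map. -/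
def cxConj : (ℂ ⊗[ℝ] V) →ₛₗ[starRingEnd ℂ] (ℂ ⊗[ℝ] V) where
  toFun := (LinearMap.rTensor V Complex.conjAe.toLinearMap)
  map_add' x y := map_add _ x y
  map_smul' c x := by
    induction x using TensorProduct.induction_on with
    | zero => simp
    | tmul a v => simp [TensorProduct.smul_tmul', smul_eq_mul, map_mul]
    | add x y hx hy =>
        simp only [smul_add, map_add]
        exact congrArg₂ (· + ·) hx hy

instance : RingHomSurjective (starRingEnd ℂ) :=
  ⟨fun c => ⟨(starRingEnd ℂ) c, by simp⟩⟩

/-- The complexification `S_ℂ ⊆ V_ℂ` of a real subspace `S ⊆ V`. -/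
def cxSpan (S : Submodule ℝ V) : Submodule ℂ (ℂ ⊗[ℝ] V) :=
  Submodule.span ℂ ((fun v => (1 : ℂ) ⊗ₜ[ℝ] v) '' (S : Set V))

end Complexification


section TrivialExtension

variable {R : Type*} [CommRing R] {L : Type*} [LieRing L]

/-- The Lie bracket `[(ξ,r),(η,k)] = ([ξ,η],0)` on the abelian extension `L ⊕ R`. -/
instance instLieRingTrivExt : LieRing (L × R) where
  bracket x y := (⁅x.1, y.1⁆, 0)
  add_lie x y z := by ext <;> simp [add_lie]
  lie_add x y z := by ext <;> simp [lie_add]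
  lie_self x := by ext <;> simp
  leibniz_lie x y z := by ext <;> simp

instance instLieAlgebraTrivExt [LieAlgebra R L] : LieAlgebra R (L × R) where
  lie_smul t x y := by
    show ((⁅x.1, (t • y).1⁆ : L), (0 : R)) = t • (⁅x.1, y.1⁆, (0 : R))
    ext <;> simp

end TrivialExtension


/-- The underlying vector space of the 5-dimensional nilpotent Lie algebra `L53`. -/
def L53 : Type := Fin 5 → ℝ

instance : AddCommGroup L53 := inferInstanceAs (AddCommGroup (Fin 5 → ℝ))
instance : Module ℝ L53 := inferInstanceAs (Module ℝ (Fin 5 → ℝ))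

theorem L53.add_apply (x y : L53) (i : Fin 5) : (x + y) i = x i + y i := rfl
theorem L53.smul_apply (t : ℝ) (x : L53) (i : Fin 5) : (t • x) i = t * x i := rfl

/-- The bracket of `L53`: `[e1,e2] = e3`, `[e1,e3] = e4`. -/
def L53.b (x y : Fin 5 → ℝ) : Fin 5 → ℝ := ![0, 0, x 0 * y 1 - x 1 * y 0, x 0 * y 2 - x 2 * y 0, 0]

instance : LieRing L53 where
  bracket x y := L53.b x y
  add_lie x y z := by
    show L53.b (x + y) z = L53.b x z + L53.b y z
    funext i; fin_cases i <;> simp [L53.b, L53.add_apply] <;> ring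
  lie_add x y z := by
    show L53.b x (y + z) = L53.b x y + L53.b x z
    funext i; fin_cases i <;> simp [L53.b, L53.add_apply] <;> ring
  lie_self x := by
    show L53.b x x = 0
    funext i; fin_cases i <;> simp [L53.b] <;> ring
  leibniz_lie x y z := by
    show L53.b x (L53.b y z) = L53.b (L53.b x y) z + L53.b y (L53.b x z)
    funext i; fin_cases i <;> simp [L53.b, L53.add_apply] <;> ring

instance : LieAlgebra ℝ L53 where
  lie_smul t x y := by
    show L53.b x (t • y) = t • L53.b x y
    funext i; fin_cases i <;> simp [L53.b, L53.smul_apply] <;> ring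

/-- The standard basis `e1, …, e5` of `L53` (indexed by `0, …, 4`). -/
def L53.e (i : Fin 5) : L53 := (Pi.single i 1 : Fin 5 → ℝ)

/-- The dual basis `e^1, …, e^5` of `L53` (indexed by `0, …, 4`). -/
def L53.eps (i : Fin 5) : Module.Dual ℝ L53 where
  toFun x := x i
  map_add' _ _ := rfl
  map_smul' _ _ := rfl


/-- The complexification `(g_ℝ)_ℂ = ℂ ⊗[ℝ] (L53 ⊕ ℝ)`, a complex Lie algebra. -/
abbrev gRC : Type := ℂ ⊗[ℝ] (L53 × ℝ)

/-- The canonical inclusion `g_ℝ → (g_ℝ)_ℂ`. -/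
def inc (p : L53 × ℝ) : gRC := (1 : ℂ) ⊗ₜ[ℝ] p

/-- `K = span_ℂ {1, e1, e3, e4, e2 − i e5} ⊆ (g_ℝ)_ℂ`. -/
def Ksub : Submodule ℂ gRC :=
  Submodule.span ℂ {inc (0, 1), inc (L53.e 0, 0), inc (L53.e 2, 0), inc (L53.e 3, 0),
    inc (L53.e 1, 0) - Complex.I • inc (L53.e 4, 0)}

section Aux

open Sum

/-- A real basis of `L53 × ℝ`. -/
def rB : Module.Basis (Fin 5 ⊕ Unit) ℝ (L53 × ℝ) :=
  (Pi.basisFun ℝ (Fin 5)).prod (Module.Basis.singleton Unit ℝ)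

lemma rB_inl (i : Fin 5) : rB (Sum.inl i) = (L53.e i, 0) := by
  refine Prod.ext ?_ ?_
  · exact (Module.Basis.prod_apply_inl_fst (M := L53) _ _ _).trans ((Pi.basisFun_apply ℝ (Fin 5) i).trans (by rw [L53.e]))
  · exact Module.Basis.prod_apply_inl_snd (M := L53) _ _ _

lemma rB_inr : rB (Sum.inr ()) = ((0 : L53), (1 : ℝ)) := by
  refine Prod.ext ?_ ?_
  · exact Module.Basis.prod_apply_inr_fst (M := L53) _ _ _
  · exact (Module.Basis.prod_apply_inr_snd (M := L53) _ _ _).trans (by simp)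

lemma gzero_lie (y : gRC) : ⁅(0 : gRC), y⁆ = 0 := zero_lie y
lemma glie_zero (x : gRC) : ⁅x, (0 : gRC)⁆ = 0 := lie_zero x
lemma gadd_lie (x y z : gRC) : ⁅x + y, z⁆ = ⁅x, z⁆ + ⁅y, z⁆ := add_lie x y z
lemma glie_add (x y z : gRC) : ⁅x, y + z⁆ = ⁅x, y⁆ + ⁅x, z⁆ := lie_add x y z

/-- The induced complex basis of `gRC`. -/
def gB : Module.Basis (Fin 5 ⊕ Unit) ℂ gRC :=
  Algebra.TensorProduct.basis ℂ rB

lemma gB_inl (i : Fin 5) : gB (Sum.inl i) = inc (L53.e i, 0) := by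
  rw [gB, Algebra.TensorProduct.basis_apply, rB_inl]; rfl

lemma gB_inr : gB (Sum.inr ()) = inc (0, 1) := by
  rw [gB, Algebra.TensorProduct.basis_apply, rB_inr]; rfl

lemma cxConj_tmul {V : Type*} [AddCommGroup V] [Module ℝ V] (a : ℂ) (v : V) :
    cxConj V (a ⊗ₜ[ℝ] v) = (starRingEnd ℂ a) ⊗ₜ[ℝ] v := by
  show LinearMap.rTensor V Complex.conjAe.toLinearMap (a ⊗ₜ[ℝ] v) = _
  simp [LinearMap.rTensor_tmul]

lemma cxConj_inc (p : L53 × ℝ) : cxConj (L53 × ℝ) (inc p) = inc p := by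
  rw [inc, cxConj_tmul]; norm_num

lemma coord_tmul (i : Fin 5 ⊕ Unit) (a : ℂ) (v : L53 × ℝ) :
    gB.coord i (a ⊗ₜ[ℝ] v) = a * ((rB.repr v i : ℝ) : ℂ) := by
  simp [gB, Module.Basis.coord_apply, Algebra.TensorProduct.basis_repr_tmul,
    Complex.coe_algebraMap, Finsupp.mapRange_apply]

lemma coord_conj (i : Fin 5 ⊕ Unit) (x : gRC) :
    gB.coord i (cxConj (L53 × ℝ) x) = starRingEnd ℂ (gB.coord i x) := by
  induction x using TensorProduct.induction_on with
  | zero => simp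
  | add x y hx hy => simp only [map_add, hx, hy]
  | tmul a v => rw [cxConj_tmul, coord_tmul, coord_tmul, map_mul, Complex.conj_ofReal]

lemma cxConj_conj (x : gRC) : cxConj (L53 × ℝ) (cxConj (L53 × ℝ) x) = x := by
  induction x using TensorProduct.induction_on with
  | zero => simp
  | add x y hx hy => simp only [map_add, hx, hy]
  | tmul a v => rw [cxConj_tmul, cxConj_tmul, Complex.conj_conj]

lemma coord_rel_of_memK {x : gRC} (hx : x ∈ Ksub) :
    gB.coord (inl 4) x = -(Complex.I * gB.coord (inl 1) x) := by
  induction hx using Submodule.span_induction with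
  | mem g hg =>
    have hc : ∀ i j : Fin 5 ⊕ Unit, gB.coord i (gB j) = if j = i then 1 else 0 := by
      intro i j; simp [Module.Basis.coord_apply, Finsupp.single_apply]
    simp only [Set.mem_insert_iff, Set.mem_singleton_iff] at hg
    rcases hg with rfl | rfl | rfl | rfl | rfl
    · rw [← gB_inr]; simp [hc]
    · rw [← gB_inl]; simp [hc]
    · rw [← gB_inl]; simp [hc]
    · rw [← gB_inl]; simp [hc]
    · rw [← gB_inl 1, ← gB_inl 4]; simp [hc]
  | zero => simp
  | add x y hx hy h1 h2 => simp only [map_add, h1, h2]; ring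
  | smul a x hx h => simp only [map_smul, smul_eq_mul, h]; ring

lemma sum_repr (x : gRC) :
    x = gB.coord (inl 0) x • gB (inl 0) + gB.coord (inl 1) x • gB (inl 1) +
      gB.coord (inl 2) x • gB (inl 2) + gB.coord (inl 3) x • gB (inl 3) +
      gB.coord (inl 4) x • gB (inl 4) + gB.coord (inr ()) x • gB (inr ()) := by
  conv_lhs => rw [← gB.sum_repr x]
  rw [Fintype.sum_sum_type, Fin.sum_univ_five]
  simp [Module.Basis.coord_apply, add_assoc]

lemma bracket_mem_span (x y : gRC) :
    ⁅x, y⁆ ∈ Submodule.span ℂ {inc (L53.e 2, 0), inc (L53.e 3, 0)} := by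
  induction x using TensorProduct.induction_on with
  | zero => rw [gzero_lie]; exact zero_mem _
  | add a b ha hb => rw [gadd_lie]; exact add_mem ha hb
  | tmul a p =>
    induction y using TensorProduct.induction_on with
    | zero => rw [glie_zero]; exact zero_mem _
    | add c d hc hd => rw [glie_add]; exact add_mem hc hd
    | tmul b q =>
      rw [LieAlgebra.ExtendScalars.bracket_tmul]
      have hbr : (⁅p, q⁆ : L53 × ℝ) =
          (p.1 0 * q.1 1 - p.1 1 * q.1 0) • ((L53.e 2, 0) : L53 × ℝ) +
          (p.1 0 * q.1 2 - p.1 2 * q.1 0) • ((L53.e 3, 0) : L53 × ℝ) := by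
        show (L53.b p.1 q.1, (0 : ℝ)) = _
        refine Prod.ext ?_ ?_
        · funext i
          fin_cases i <;>
            simp [L53.b, L53.add_apply, L53.smul_apply] <;> simp [L53.e, Pi.single_apply]
        · simp
      have h1 : (a * b) ⊗ₜ[ℝ] (⁅p, q⁆ : L53 × ℝ) = (a * b) • inc ⁅p, q⁆ := by
        rw [inc, TensorProduct.smul_tmul', smul_eq_mul, mul_one]
      rw [h1, hbr]
      simp only [inc]
      rw [TensorProduct.tmul_add, TensorProduct.tmul_smul, TensorProduct.tmul_smul]
      exact Submodule.smul_mem _ _ (add_mem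
        (Submodule.smul_of_tower_mem _ _ (Submodule.subset_span (Set.mem_insert _ _)))
        (Submodule.smul_of_tower_mem _ _ (Submodule.subset_span (Set.mem_insert_of_mem _ rfl))))

end Aux

/-- Let `g = L_{5,3}` (nonzero brackets `[e1,e2]=e3`, `[e1,e3]=e4`) and
let `g_ℝ = g ⊕ ℝ` with bracket `[(ξ,r),(η,k)] = ([ξ,η],0)` and `1 := (0,1)`.  In the
complexification `(g_ℝ)_ℂ`, the complex subspace
`K := span_ℂ {1, e1, e3, e4, e2 − i·e5}` is a complex Lie subalgebra and satisfies
`K + conj K = (g_ℝ)_ℂ` and `K ∩ conj K = span_ℂ {1, e1, e3, e4}`. -/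
theorem L53_transverse_complex :
    (∀ x ∈ Ksub, ∀ y ∈ Ksub, ⁅x, y⁆ ∈ Ksub) ∧
    Ksub ⊔ Ksub.map (cxConj (L53 × ℝ)) = ⊤ ∧
    Ksub ⊓ Ksub.map (cxConj (L53 × ℝ)) =
      Submodule.span ℂ {inc (0, 1), inc (L53.e 0, 0), inc (L53.e 2, 0), inc (L53.e 3, 0)} := by
  have memgen : ∀ g ∈ ({inc (0, 1), inc (L53.e 0, 0), inc (L53.e 2, 0), inc (L53.e 3, 0),
      inc (L53.e 1, 0) - Complex.I • inc (L53.e 4, 0)} : Set gRC), g ∈ Ksub :=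
    fun g hg => Submodule.subset_span hg
  have hu : inc (0, 1) ∈ Ksub := memgen _ (by simp)
  have hv0 : inc (L53.e 0, 0) ∈ Ksub := memgen _ (by simp)
  have hv2 : inc (L53.e 2, 0) ∈ Ksub := memgen _ (by simp)
  have hv3 : inc (L53.e 3, 0) ∈ Ksub := memgen _ (by simp)
  have hw : inc (L53.e 1, 0) - Complex.I • inc (L53.e 4, 0) ∈ Ksub := memgen _ (by simp)
  have hwc : cxConj (L53 × ℝ) (inc (L53.e 1, 0) - Complex.I • inc (L53.e 4, 0)) =
      inc (L53.e 1, 0) + Complex.I • inc (L53.e 4, 0) := by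
    rw [map_sub, LinearMap.map_smulₛₗ, cxConj_inc, cxConj_inc, Complex.conj_I, neg_smul,
      sub_neg_eq_add]
  have hw' : inc (L53.e 1, 0) + Complex.I • inc (L53.e 4, 0) ∈ Ksub.map (cxConj (L53 × ℝ)) :=
    ⟨_, hw, hwc⟩
  refine ⟨?_, ?_, ?_⟩
  · intro x _ y _
    refine Submodule.span_le.mpr ?_ (bracket_mem_span x y)
    rintro g (rfl | rfl)
    · exact hv2
    · exact hv3
  · refine le_antisymm le_top ?_
    rw [← gB.span_eq, Submodule.span_le]
    rintro _ ⟨j, rfl⟩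
    rcases j with i | u
    · fin_cases i
      · rw [gB_inl]; exact Submodule.mem_sup_left hv0
      · rw [gB_inl]
        show inc (L53.e 1, 0) ∈ (Ksub ⊔ Ksub.map (cxConj (L53 × ℝ)) : Submodule ℂ gRC)
        have key : inc (L53.e 1, 0) =
            (2⁻¹ : ℂ) • (inc (L53.e 1, 0) - Complex.I • inc (L53.e 4, 0)) +
            (2⁻¹ : ℂ) • (inc (L53.e 1, 0) + Complex.I • inc (L53.e 4, 0)) := by
          module
        rw [key]
        exact add_mem (Submodule.smul_mem _ _ (Submodule.mem_sup_left hw))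
          (Submodule.smul_mem _ _ (Submodule.mem_sup_right hw'))
      · rw [gB_inl]; exact Submodule.mem_sup_left hv2
      · rw [gB_inl]; exact Submodule.mem_sup_left hv3
      · rw [gB_inl]
        show inc (L53.e 4, 0) ∈ (Ksub ⊔ Ksub.map (cxConj (L53 × ℝ)) : Submodule ℂ gRC)
        have key : Complex.I • inc (L53.e 4, 0) =
            (2⁻¹ : ℂ) • (inc (L53.e 1, 0) + Complex.I • inc (L53.e 4, 0)) -
            (2⁻¹ : ℂ) • (inc (L53.e 1, 0) - Complex.I • inc (L53.e 4, 0)) := by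
          module
        have h5 : Complex.I • inc (L53.e 4, 0) ∈ Ksub ⊔ Ksub.map (cxConj (L53 × ℝ)) := by
          rw [key]
          exact sub_mem (Submodule.smul_mem _ _ (Submodule.mem_sup_right hw'))
            (Submodule.smul_mem _ _ (Submodule.mem_sup_left hw))
        have key2 : inc (L53.e 4, 0) = (-Complex.I) • (Complex.I • inc (L53.e 4, 0)) := by
          rw [smul_smul, neg_mul, Complex.I_mul_I, neg_neg, one_smul]
        rw [key2]
        exact Submodule.smul_mem _ _ h5
    · rw [show u = () from rfl, gB_inr]; exact Submodule.mem_sup_left hu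
  · refine le_antisymm ?_ ?_
    · rintro x hx
      obtain ⟨hx1, hx2⟩ := Submodule.mem_inf.mp hx
      obtain ⟨y, hy, rfl⟩ := Submodule.mem_map.mp hx2
      have e1 : gB.coord (Sum.inl 4) (cxConj (L53 × ℝ) y) =
          Complex.I * gB.coord (Sum.inl 1) (cxConj (L53 × ℝ) y) := by
        rw [coord_conj, coord_rel_of_memK hy, coord_conj, map_neg, map_mul, Complex.conj_I]
        ring
      have e2 := coord_rel_of_memK hx1
      have h0 : (2 * Complex.I) * gB.coord (Sum.inl 1) (cxConj (L53 × ℝ) y) = 0 := by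
        linear_combination e2 - e1
      have h1 : gB.coord (Sum.inl 1) (cxConj (L53 × ℝ) y) = 0 := by
        rcases mul_eq_zero.mp h0 with h | h
        · exact absurd h (by simp [Complex.I_ne_zero])
        · exact h
      have h4 : gB.coord (Sum.inl 4) (cxConj (L53 × ℝ) y) = 0 := by
        rw [e1, h1, mul_zero]
      have hrepr := sum_repr (cxConj (L53 × ℝ) y)
      rw [h1, h4, zero_smul, zero_smul, add_zero, add_zero, gB_inl 0, gB_inl 2, gB_inl 3,
        gB_inr] at hrepr
      rw [hrepr]
      refine add_mem (add_mem (add_mem ?_ ?_) ?_) ?_ <;>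
        exact Submodule.smul_mem _ _ (Submodule.subset_span (by simp))
    · rw [Submodule.span_le]
      rintro g (rfl | rfl | rfl | rfl)
      · exact Submodule.mem_inf.mpr ⟨hu, ⟨_, hu, cxConj_inc _⟩⟩
      · exact Submodule.mem_inf.mpr ⟨hv0, ⟨_, hv0, cxConj_inc _⟩⟩
      · exact Submodule.mem_inf.mpr ⟨hv2, ⟨_, hv2, cxConj_inc _⟩⟩
      · exact Submodule.mem_inf.mpr ⟨hv3, ⟨_, hv3, cxConj_inc _⟩⟩

end
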